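/- Let W ⊆ ℂ be a domain, h_k harmonic on W, and h harmonic on W. Let E ⊂ W be a discrete (no accumulation points in W) set, and suppose h_k → h locally uniformly on W \ E. Then h_k → h locally uniformly on all of W. (Removable exceptional set via the maximum principle.) -/

import Mathlib

open Filter

/-- `f` is harmonic on `U`: twice continuously differentiable with vanishing Laplacian. -/
def HarmonicOnSet (f : ℂ → ℝ) (U : Set ℂ) : Prop :=
  ContDiffOn ℝ 2 f U ∧
  ∀ z ∈ U, fderiv ℝ (fun w => fderiv ℝ f w 1) z 1 +
    fderiv ℝ (fun w => fderiv ℝ f w Complex.I) z Complex.I = 0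

namespace Stmt10Aux

open Metric Complex intervalIntegral Real Set

/-- The "conjugate gradient" `∂f/∂x - i ∂f/∂y` of a function `f : ℂ → ℝ`. -/
noncomputable def phi (f : ℂ → ℝ) (z : ℂ) : ℂ :=
  ((fderiv ℝ f z 1 : ℝ) : ℂ) - ((fderiv ℝ f z Complex.I : ℝ) : ℂ) * Complex.I

variable {f : ℂ → ℝ} {W : Set ℂ}

lemma fderiv_diffOn (hW : IsOpen W) (hf : HarmonicOnSet f W) :
    DifferentiableOn ℝ (fderiv ℝ f) W :=
  ((hf.1.fderiv_of_isOpen (m := 1) hW (by norm_num)).differentiableOn (by norm_num))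

lemma f_diffAt (hW : IsOpen W) (hf : HarmonicOnSet f W) {z : ℂ} (hz : z ∈ W) :
    DifferentiableAt ℝ f z :=
  ((hf.1.differentiableOn (by norm_num)) z hz).differentiableAt (hW.mem_nhds hz)

lemma hasFDerivAt_fderiv_apply (hW : IsOpen W) (hf : HarmonicOnSet f W) {z : ℂ}
    (hz : z ∈ W) (v : ℂ) :
    HasFDerivAt (fun w => fderiv ℝ f w v) ((fderiv ℝ (fderiv ℝ f) z).flip v) z := by
  have hd : HasFDerivAt (fderiv ℝ f) (fderiv ℝ (fderiv ℝ f) z) z :=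
    ((fderiv_diffOn hW hf z hz).differentiableAt (hW.mem_nhds hz)).hasFDerivAt
  have := hd.clm_apply (hasFDerivAt_const v z)
  simpa using this

lemma phi_hasFDerivAt (hW : IsOpen W) (hf : HarmonicOnSet f W) {z : ℂ} (hz : z ∈ W) :
    DifferentiableAt ℂ (phi f) z := by
  set f'' := fderiv ℝ (fderiv ℝ f) z with hf''def
  have hev : ∀ᶠ y in nhds z, HasFDerivAt f (fderiv ℝ f y) y :=
    Filter.eventually_of_mem (hW.mem_nhds hz)
      (fun y hy => (f_diffAt hW hf hy).hasFDerivAt)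
  have hd2 : HasFDerivAt (fderiv ℝ f) f'' z :=
    ((fderiv_diffOn hW hf z hz).differentiableAt (hW.mem_nhds hz)).hasFDerivAt
  have hsym : ∀ v w, f'' v w = f'' w v := fun v w =>
    second_derivative_symmetric_of_eventually hev hd2 v w
  have h1 : HasFDerivAt (fun w => fderiv ℝ f w 1) (f''.flip 1) z :=
    hasFDerivAt_fderiv_apply hW hf hz 1
  have hI : HasFDerivAt (fun w => fderiv ℝ f w Complex.I) (f''.flip Complex.I) z :=
    hasFDerivAt_fderiv_apply hW hf hz Complex.I
  have hlap : f'' 1 1 + f'' Complex.I Complex.I = 0 := by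
    have h2 := hf.2 z hz
    rw [h1.fderiv, hI.fderiv] at h2
    simpa using h2
  have hL : HasFDerivAt (phi f)
      (Complex.ofRealCLM.comp (f''.flip 1) -
        Complex.I • (Complex.ofRealCLM.comp (f''.flip Complex.I))) z := by
    have ha : HasFDerivAt (fun w => ((fderiv ℝ f w 1 : ℝ) : ℂ))
        (Complex.ofRealCLM.comp (f''.flip 1)) z := Complex.ofRealCLM.hasFDerivAt.comp z h1
    have hb : HasFDerivAt (fun w => ((fderiv ℝ f w Complex.I : ℝ) : ℂ))
        (Complex.ofRealCLM.comp (f''.flip Complex.I)) z :=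
      Complex.ofRealCLM.hasFDerivAt.comp z hI
    exact ha.sub (hb.mul_const Complex.I)
  set d : ℂ := ((f'' 1 1 : ℝ) : ℂ) - ((f'' 1 Complex.I : ℝ) : ℂ) * Complex.I with hd
  have Heq : ((1 : ℂ →L[ℂ] ℂ).smulRight d).restrictScalars ℝ =
      (Complex.ofRealCLM.comp (f''.flip 1) -
        Complex.I • (Complex.ofRealCLM.comp (f''.flip Complex.I))) := by
    refine ContinuousLinearMap.ext fun v => ?_
    have hvdec : v = v.re • (1 : ℂ) + v.im • Complex.I := by
      rw [Complex.real_smul, Complex.real_smul, mul_one]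
      exact (Complex.re_add_im v).symm
    have edec : ∀ w : ℂ, f'' v w = v.re * f'' 1 w + v.im * f'' Complex.I w := by
      intro w
      conv_lhs => rw [hvdec]
      rw [map_add, map_smul, map_smul]
      simp only [ContinuousLinearMap.add_apply, ContinuousLinearMap.smul_apply, smul_eq_mul]
    have e1 : f'' v 1 = v.re * f'' 1 1 + v.im * f'' Complex.I 1 := edec 1
    have e2 : f'' v Complex.I = v.re * f'' 1 Complex.I + v.im * f'' Complex.I Complex.I :=
      edec Complex.I
    have hII : f'' Complex.I Complex.I = - f'' 1 1 := by linarith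
    have hI1 : f'' Complex.I 1 = f'' 1 Complex.I := hsym _ _
    simp only [ContinuousLinearMap.coe_restrictScalars', ContinuousLinearMap.smulRight_apply,
      ContinuousLinearMap.one_apply, ContinuousLinearMap.sub_apply,
      ContinuousLinearMap.smul_apply, ContinuousLinearMap.coe_comp', Function.comp_apply,
      ContinuousLinearMap.flip_apply, Complex.ofRealCLM_apply, smul_eq_mul, hd]
    rw [e1, e2, hII, hI1]
    apply Complex.ext <;> simp [Complex.mul_re, Complex.mul_im] <;> ring
  exact ⟨_, hasFDerivAt_of_restrictScalars ℝ hL Heq⟩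

lemma phi_continuousOn (hW : IsOpen W) (hf : HarmonicOnSet f W) :
    ContinuousOn (phi f) W := by
  have hc : ContinuousOn (fderiv ℝ f) W :=
    hf.1.continuousOn_fderiv_of_isOpen hW (by norm_num)
  have h1 : ContinuousOn (fun z => fderiv ℝ f z 1) W := hc.clm_apply continuousOn_const
  have h2 : ContinuousOn (fun z => fderiv ℝ f z Complex.I) W := hc.clm_apply continuousOn_const
  exact (Complex.continuous_ofReal.comp_continuousOn h1).sub
    ((Complex.continuous_ofReal.comp_continuousOn h2).mul continuousOn_const)

lemma im_integrand (f : ℂ → ℝ) (w : ℂ) (r θ : ℝ) :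
    ((circleMap 0 r θ * Complex.I) * phi f w).im
      = r * (fderiv ℝ f w (circleMap 0 1 θ)) := by
  have hdec : fderiv ℝ f w (circleMap 0 1 θ)
      = Real.cos θ * fderiv ℝ f w 1 + Real.sin θ * fderiv ℝ f w Complex.I := by
    have h1 : circleMap 0 1 θ = (Real.cos θ) • (1 : ℂ) + (Real.sin θ) • Complex.I := by
      simp [circleMap, Complex.exp_mul_I, Complex.real_smul]
    rw [h1, map_add, map_smul, map_smul, smul_eq_mul, smul_eq_mul]
  rw [hdec]
  simp [phi, circleMap, Complex.exp_mul_I, Complex.mul_im, Complex.mul_re,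
    Complex.sin_ofReal_re, Complex.cos_ofReal_re]
  ring

/-- The **mean value property** of harmonic functions. -/
lemma mvp (hW : IsOpen W) (hf : HarmonicOnSet f W) {c : ℂ} {ρ : ℝ} (hρ : 0 < ρ)
    (hsub : closedBall c ρ ⊆ W) :
    ∫ θ in (0:ℝ)..(2*π), f (circleMap c ρ θ) = 2 * π * f c := by
  obtain ⟨δ, hδpos, hδ⟩ :=
    (isCompact_closedBall c ρ).exists_cthickening_subset_open hW hsub
  set R : ℝ := ρ + δ with hRdef
  have hρR : ρ < R := by simp [hRdef]; linarith
  have hR0 : 0 < R := hρ.trans hρR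
  have hRW : closedBall c R ⊆ W := by
    refine subset_trans ?_ hδ
    intro w hw
    have : closedBall c R ⊆ cthickening δ (closedBall c ρ) := by
      rw [cthickening_closedBall hδpos.le hρ.le]
      simp [hRdef, add_comm]
    exact this hw
  have hcf : ContinuousOn f W := hf.1.continuousOn
  have hcd : ContinuousOn (fderiv ℝ f) W :=
    hf.1.continuousOn_fderiv_of_isOpen hW (by norm_num)
  obtain ⟨M, hM⟩ : ∃ M, ∀ w ∈ closedBall c R, ‖fderiv ℝ f w‖ ≤ M :=
    (isCompact_closedBall c R).exists_bound_of_continuousOn (hcd.mono hRW)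
  -- the circle integral of `phi f` vanishes on all circles of radius `≤ R`
  have circ0 : ∀ r : ℝ, 0 ≤ r → r ≤ R → (∮ z in C(c, r), phi f z) = 0 := by
    intro r h0 hrR
    have hball : closedBall c r ⊆ W := fun w hw =>
      hRW (closedBall_subset_closedBall hrR hw)
    exact Complex.circleIntegral_eq_zero_of_differentiable_on_off_countable h0
      Set.countable_empty ((phi_continuousOn hW hf).mono hball)
      (fun z hz => phi_hasFDerivAt hW hf (hball (ball_subset_closedBall hz.1)))
  -- hence the radial-derivative integral vanishes
  have Fder0 : ∀ r : ℝ, 0 < r → r ≤ R →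
      ∫ θ in (0:ℝ)..(2*π), fderiv ℝ f (circleMap c r θ) (circleMap 0 1 θ) = 0 := by
    intro r h0 hrR
    have hball : closedBall c r ⊆ W := fun w hw =>
      hRW (closedBall_subset_closedBall hrR hw)
    have hcont : Continuous (fun θ => deriv (circleMap c r) θ • phi f (circleMap c r θ)) := by
      have h1 : Continuous (fun θ => phi f (circleMap c r θ)) :=
        (phi_continuousOn hW hf).comp_continuous (continuous_circleMap c r)
          (fun θ => hball (circleMap_mem_closedBall c h0.le θ))
      have h2 : Continuous (fun θ => deriv (circleMap c r) θ) := by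
        simp only [deriv_circleMap]
        exact (continuous_circleMap 0 r).mul continuous_const
      exact h2.smul h1
    have hint : IntervalIntegrable
        (fun θ => deriv (circleMap c r) θ • phi f (circleMap c r θ))
        MeasureTheory.volume 0 (2*π) := hcont.intervalIntegrable _ _
    have h0' := circ0 r h0.le hrR
    rw [circleIntegral] at h0'
    have him := Complex.imCLM.intervalIntegral_comp_comm hint
    rw [h0'] at him
    simp only [Complex.imCLM_apply, deriv_circleMap, smul_eq_mul, map_zero] at him
    have heq : ∀ θ : ℝ, ((circleMap 0 r θ * Complex.I) * phi f (circleMap c r θ)).im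
        = r * fderiv ℝ f (circleMap c r θ) (circleMap 0 1 θ) :=
      fun θ => im_integrand f (circleMap c r θ) r θ
    rw [intervalIntegral.integral_congr (fun θ _ => heq θ)] at him
    rw [intervalIntegral.integral_const_mul] at him
    rcases mul_eq_zero.1 him with h | h
    · exact absurd h h0.ne'
    · exact h
  -- the circle average as a function of the radius
  set F : ℝ → ℝ := fun r => ∫ θ in (0:ℝ)..(2*π), f (circleMap c r θ) with hFdef
  have hF' : ∀ r : ℝ, 0 < r → r < R → HasDerivAt F 0 r := by
    intro r₀ h0 hrR
    set ε : ℝ := min r₀ (R - r₀) with hεdef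
    have hεpos : 0 < ε := lt_min h0 (by linarith)
    have hball : ∀ x ∈ ball r₀ ε, 0 < x ∧ x < R := by
      intro x hx
      rw [mem_ball, Real.dist_eq, abs_lt] at hx
      constructor
      · have := hx.1; have h1 : ε ≤ r₀ := min_le_left _ _; linarith
      · have := hx.2; have h2 : ε ≤ R - r₀ := min_le_right _ _; linarith
    have hmem : ∀ (x : ℝ), 0 < x → x ≤ R → ∀ θ : ℝ, circleMap c x θ ∈ W := by
      intro x hx hxR θ
      exact hRW (closedBall_subset_closedBall hxR (circleMap_mem_closedBall c hx.le θ))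
    have key := intervalIntegral.hasDerivAt_integral_of_dominated_loc_of_deriv_le
      (F := fun (x : ℝ) (θ : ℝ) => f (circleMap c x θ))
      (F' := fun (x : ℝ) (θ : ℝ) => fderiv ℝ f (circleMap c x θ) (circleMap 0 1 θ))
      (x₀ := r₀) (a := 0) (b := 2*π) (bound := fun _ => M)
      (μ := MeasureTheory.volume) (ball_mem_nhds r₀ hεpos) ?_ ?_ ?_ ?_ ?_ ?_
    · have := key.2
      rwa [Fder0 r₀ h0 hrR.le] at this
    · -- measurability of F x
      filter_upwards [ball_mem_nhds r₀ hεpos] with x hx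
      obtain ⟨hx0, hxR⟩ := hball x hx
      exact (hcf.comp_continuous (continuous_circleMap c x)
        (hmem x hx0 hxR.le)).aestronglyMeasurable
    · -- integrability of F r₀
      exact (hcf.comp_continuous (continuous_circleMap c r₀)
        (hmem r₀ h0 hrR.le)).intervalIntegrable _ _
    · -- measurability of F' r₀
      have hcont : Continuous (fun θ => fderiv ℝ f (circleMap c r₀ θ) (circleMap 0 1 θ)) :=
        (hcd.comp_continuous (continuous_circleMap c r₀)
          (hmem r₀ h0 hrR.le)).clm_apply (continuous_circleMap 0 1)
      exact hcont.aestronglyMeasurable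
    · -- bound
      refine Filter.Eventually.of_forall (fun θ _ x hx => ?_)
      obtain ⟨hx0, hxR⟩ := hball x hx
      have h1 : circleMap c x θ ∈ closedBall c R :=
        closedBall_subset_closedBall hxR.le (circleMap_mem_closedBall c hx0.le θ)
      calc ‖fderiv ℝ f (circleMap c x θ) (circleMap 0 1 θ)‖
          ≤ ‖fderiv ℝ f (circleMap c x θ)‖ * ‖circleMap 0 1 θ‖ :=
            (fderiv ℝ f (circleMap c x θ)).le_opNorm _
        _ ≤ M * 1 := by
            apply mul_le_mul (hM _ h1) _ (norm_nonneg _)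
              ((norm_nonneg _).trans (hM _ h1))
            have : ‖circleMap 0 1 θ‖ = |(1:ℝ)| := norm_circleMap_zero 1 θ
            simp only [this, abs_one, le_refl]
        _ = M := mul_one M
    · exact intervalIntegrable_const
    · -- differentiability in x
      refine Filter.Eventually.of_forall (fun θ _ x hx => ?_)
      obtain ⟨hx0, hxR⟩ := hball x hx
      have hcm : HasDerivAt (fun y : ℝ => circleMap c y θ) (circleMap 0 1 θ) x := by
        have h1 : HasDerivAt (fun y : ℝ => ((y : ℝ) : ℂ)) 1 x := by
          simpa using (hasDerivAt_id x).ofReal_comp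
        have h2 : HasDerivAt (fun y : ℝ => ((y : ℝ) : ℂ) * Complex.exp (θ * Complex.I))
            (Complex.exp (θ * Complex.I)) x := by
          simpa using h1.mul_const (Complex.exp (θ * Complex.I))
        have h3 := h2.const_add c
        have : circleMap 0 1 θ = Complex.exp (θ * Complex.I) := by simp [circleMap]
        rw [this]
        simpa [circleMap] using h3
      have hfd : HasFDerivAt f (fderiv ℝ f (circleMap c x θ)) (circleMap c x θ) :=
        (f_diffAt hW hf (hmem x hx0 hxR.le θ)).hasFDerivAt
      exact hfd.comp_hasDerivAt x hcm
  -- `F` is constant on `(0, ρ]`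
  have hconst : ∀ a : ℝ, 0 < a → a ≤ ρ → F ρ = F a := by
    intro a ha haρ
    have h1 : ∀ x ∈ Icc a ρ, F x = F a := by
      apply constant_of_has_deriv_right_zero
      · intro x hx
        exact (hF' x (lt_of_lt_of_le ha hx.1)
          (lt_of_le_of_lt hx.2 hρR)).continuousAt.continuousWithinAt
      · intro x hx
        exact (hF' x (lt_of_lt_of_le ha hx.1)
          (lt_of_le_of_lt hx.2.le hρR)).hasDerivWithinAt
    exact h1 ρ ⟨haρ, le_rfl⟩
  -- `F a → 2π f c` as `a → 0⁺`
  have hlim : Tendsto F (nhdsWithin 0 (Set.Ioi 0)) (nhds (2 * π * f c)) := by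
    rw [Metric.tendsto_nhdsWithin_nhds]
    intro ε hε
    have hcfc : ContinuousAt f c := (hcf.continuousAt (hW.mem_nhds (hsub (mem_closedBall_self hρ.le))))
    obtain ⟨δ₁, hδ₁pos, hδ₁⟩ := Metric.continuousAt_iff.1 hcfc (ε / 7) (by linarith)
    refine ⟨min δ₁ ρ, lt_min hδ₁pos hρ, fun {a} ha hd => ?_⟩
    rw [Real.dist_eq, abs_lt] at hd
    have ha0 : 0 < a := ha
    have haδ : a < δ₁ := by have := hd.2; simp at this; exact lt_of_lt_of_le (by linarith) (min_le_left _ _)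
    have haρ : a ≤ ρ := by have := hd.2; simp at this; exact le_of_lt (lt_of_lt_of_le (by linarith) (min_le_right _ _))
    have hint : IntervalIntegrable (fun θ => f (circleMap c a θ)) MeasureTheory.volume 0 (2*π) := by
      apply Continuous.intervalIntegrable
      exact hcf.comp_continuous (continuous_circleMap c a)
        (fun θ => hsub (closedBall_subset_closedBall haρ (circleMap_mem_closedBall c ha0.le θ)))
    have h2πfc : 2 * π * f c = ∫ θ in (0:ℝ)..(2*π), f c := by
      rw [intervalIntegral.integral_const, sub_zero, smul_eq_mul]
    rw [Real.dist_eq, hFdef]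
    have heq : F a - 2 * π * f c = ∫ θ in (0:ℝ)..(2*π), (f (circleMap c a θ) - f c) := by
      rw [h2πfc, hFdef]
      exact (intervalIntegral.integral_sub hint intervalIntegrable_const).symm
    have hb : ∀ θ ∈ Set.uIoc (0:ℝ) (2*π), ‖f (circleMap c a θ) - f c‖ ≤ ε / 7 := by
      intro θ _
      have hdist : dist (circleMap c a θ) c < δ₁ := by
        have : circleMap c a θ ∈ sphere c |a| := circleMap_mem_sphere' c a θ
        rw [mem_sphere] at this
        rw [this, abs_of_pos ha0]; exact haδ
      have := hδ₁ hdist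
      rw [Real.dist_eq] at this
      exact le_of_lt this
    have := intervalIntegral.norm_integral_le_of_norm_le_const hb
    show |(∫ θ in (0:ℝ)..(2*π), f (circleMap c a θ)) - 2 * π * f c| < ε
    have heq2 : (∫ θ in (0:ℝ)..(2*π), f (circleMap c a θ)) - 2 * π * f c
        = ∫ θ in (0:ℝ)..(2*π), (f (circleMap c a θ) - f c) := heq
    rw [heq2]
    have hπ : |2 * π - 0| = 2 * π := by
      rw [sub_zero, abs_of_pos]; positivity
    calc |∫ θ in (0:ℝ)..(2*π), (f (circleMap c a θ) - f c)|
        ≤ ε / 7 * |2 * π - 0| := this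
      _ = ε / 7 * (2 * π) := by rw [hπ]
      _ < ε := by nlinarith [Real.pi_lt_d2]
  -- conclude
  have hev : ∀ᶠ a in nhdsWithin 0 (Set.Ioi 0), F a = F ρ := by
    filter_upwards [Ioo_mem_nhdsGT_of_mem (Set.mem_Ico.2 ⟨le_refl 0, hρ⟩)] with a ha
    exact (hconst a ha.1 ha.2.le).symm
  have h1 : Tendsto F (nhdsWithin 0 (Set.Ioi 0)) (nhds (F ρ)) :=
    Tendsto.congr' (by filter_upwards [hev] with a ha using ha.symm) tendsto_const_nhds
  exact tendsto_nhds_unique h1 hlim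

/-- The key estimate: the distance of two harmonic functions at a center is bounded by their
distance on a surrounding circle. -/
lemma mvp_bound {g : ℂ → ℝ} (hW : IsOpen W) (hf : HarmonicOnSet f W) (hg : HarmonicOnSet g W)
    {c : ℂ} {ρ : ℝ} (hρ : 0 < ρ) (hsub : closedBall c ρ ⊆ W) {ε : ℝ} (hε : 0 ≤ ε)
    (hb : ∀ w ∈ sphere c ρ, dist (g w) (f w) ≤ ε) :
    dist (g c) (f c) ≤ ε := by
  have h1 := mvp hW hf hρ hsub
  have h2 := mvp hW hg hρ hsub
  have hif : IntervalIntegrable (fun θ => f (circleMap c ρ θ)) MeasureTheory.volume 0 (2*π) :=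
    Continuous.intervalIntegrable (hf.1.continuousOn.comp_continuous
      (continuous_circleMap c ρ) (fun θ => hsub (circleMap_mem_closedBall c hρ.le θ))) _ _
  have hig : IntervalIntegrable (fun θ => g (circleMap c ρ θ)) MeasureTheory.volume 0 (2*π) :=
    Continuous.intervalIntegrable (hg.1.continuousOn.comp_continuous
      (continuous_circleMap c ρ) (fun θ => hsub (circleMap_mem_closedBall c hρ.le θ))) _ _
  have heq : 2 * π * g c - 2 * π * f c
      = ∫ θ in (0:ℝ)..(2*π), (g (circleMap c ρ θ) - f (circleMap c ρ θ)) := by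
    rw [← h1, ← h2]
    exact (intervalIntegral.integral_sub hig hif).symm
  have hbd : ∀ θ ∈ Set.uIoc (0:ℝ) (2*π),
      ‖g (circleMap c ρ θ) - f (circleMap c ρ θ)‖ ≤ ε := by
    intro θ _
    have := hb (circleMap c ρ θ) (circleMap_mem_sphere c hρ.le θ)
    rwa [Real.dist_eq] at this
  have hn := intervalIntegral.norm_integral_le_of_norm_le_const hbd
  rw [← heq] at hn
  have hπ : |2 * π - 0| = 2 * π := by rw [sub_zero, abs_of_pos]; positivity
  rw [hπ] at hn
  have h3 : |2 * π * (g c - f c)| ≤ ε * (2 * π) := by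
    rw [mul_sub]; exact hn
  rw [abs_mul, abs_of_pos (by positivity : (0:ℝ) < 2 * π)] at h3
  rw [Real.dist_eq]
  have hπpos : (0:ℝ) < 2 * π := by positivity
  nlinarith [abs_nonneg (g c - f c)]

/-- A set with no accumulation points in `W` meets a compact subset of `W` in a finite set. -/
lemma finite_inter {E K' : Set ℂ} (hEacc : ∀ z ∈ W, ¬ AccPt z (Filter.principal E))
    (hK' : IsCompact K') (hK'W : K' ⊆ W) : (E ∩ K').Finite := by
  by_contra hinf
  have hinf' : Set.Infinite (E ∩ K') := hinf
  obtain ⟨z, hzK, hz⟩ := hinf'.exists_accPt_of_subset_isCompact hK' Set.inter_subset_right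
  exact hEacc z (hK'W hzK) (hz.mono (Filter.principal_mono.2 Set.inter_subset_left))

end Stmt10Aux

theorem stmt10 (W : Set ℂ) (hW : IsOpen W) (hWconn : IsConnected W)
    (h : ℕ → ℂ → ℝ) (g : ℂ → ℝ)
    (hhk : ∀ k, HarmonicOnSet (h k) W) (hg : HarmonicOnSet g W)
    (E : Set ℂ) (hE : E ⊆ W) (hEacc : ∀ z ∈ W, ¬ AccPt z (Filter.principal E))
    (hconv : ∀ K : Set ℂ, IsCompact K → K ⊆ W \ E →
      TendstoUniformlyOn (fun k => h k) g atTop K) :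
    ∀ K : Set ℂ, IsCompact K → K ⊆ W → TendstoUniformlyOn (fun k => h k) g atTop K := by
  classical
  intro K hK hKW
  obtain ⟨δ, hδpos, hδ⟩ := hK.exists_cthickening_subset_open hW hKW
  set K' := Metric.cthickening δ K with hK'def
  have hK'c : IsCompact K' := hK.cthickening
  have hKK' : K ⊆ K' := Metric.self_subset_cthickening K
  set S := E ∩ K' with hSdef
  have hSfin : S.Finite := Stmt10Aux.finite_inter hEacc hK'c hδ
  -- isolation radii around exceptional points
  have hrex : ∀ e ∈ S, ∃ r > 0, Metric.ball e r ∩ E ⊆ {e} := by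
    intro e he
    have hne : ¬ AccPt e (Filter.principal E) := hEacc e (hE he.1)
    rw [accPt_iff_nhds] at hne
    push_neg at hne
    obtain ⟨U, hU, hU2⟩ := hne
    obtain ⟨r, hr, hball⟩ := Metric.mem_nhds_iff.1 hU
    exact ⟨r, hr, fun y hy => hU2 y ⟨hball hy.1, hy.2⟩⟩
  choose! r hrpos hr using hrex
  -- pick a uniform small radius ρ
  obtain ⟨ρ, hρ0, hρδ, hρr⟩ : ∃ ρ : ℝ, 0 < ρ ∧ 4 * ρ ≤ δ ∧ ∀ e ∈ S, 4 * ρ < r e := by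
    set T : Finset ℝ := insert (δ/4) (hSfin.toFinset.image (fun e => r e / 8)) with hT
    have hTne : T.Nonempty := ⟨δ/4, Finset.mem_insert_self _ _⟩
    have hTpos : ∀ x ∈ T, 0 < x := by
      intro x hx
      rcases Finset.mem_insert.1 hx with rfl | hx
      · linarith
      · obtain ⟨e, he, rfl⟩ := Finset.mem_image.1 hx
        have := hrpos e (hSfin.mem_toFinset.1 he)
        linarith
    refine ⟨T.min' hTne / 2, ?_, ?_, ?_⟩
    · have := hTpos _ (T.min'_mem hTne); linarith
    · have h1 : T.min' hTne ≤ δ/4 := Finset.min'_le _ _ (Finset.mem_insert_self _ _)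
      linarith
    · intro e he
      have h1 : T.min' hTne ≤ r e / 8 := Finset.min'_le _ _
        (Finset.mem_insert.2 (Or.inr (Finset.mem_image.2 ⟨e, hSfin.mem_toFinset.2 he, rfl⟩)))
      have h2 := hTpos _ (T.min'_mem hTne)
      have h3 := hrpos e he
      nlinarith
  -- the compact set avoiding `E` on which we have uniform convergence
  set C := K' \ ⋃ e ∈ S, Metric.ball e ρ with hCdef
  have hCc : IsCompact C := hK'c.diff (isOpen_biUnion (fun e _ => Metric.isOpen_ball))
  have hCsub : C ⊆ W \ E := by
    intro z hz
    refine ⟨hδ hz.1, fun hzE => ?_⟩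
    have hzS : z ∈ S := ⟨hzE, hz.1⟩
    exact hz.2 (Set.mem_biUnion hzS (Metric.mem_ball_self hρ0))
  have Hu := hconv C hCc hCsub
  rw [Metric.tendstoUniformlyOn_iff] at Hu ⊢
  intro ε hε
  filter_upwards [Hu (ε/2) (by linarith)] with k hk
  intro z hz
  by_cases hzB : z ∈ ⋃ e ∈ S, Metric.ball e ρ
  · -- `z` is near an exceptional point: use the mean value bound on a circle of radius `2ρ`
    obtain ⟨e, heS, hze⟩ := Set.mem_iUnion₂.1 hzB
    have hze' : dist z e < ρ := Metric.mem_ball.1 hze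
    have hballK' : Metric.closedBall z (2*ρ) ⊆ K' := by
      have h2 : Metric.closedBall z (2*ρ) ⊆ Metric.closedBall z δ :=
        Metric.closedBall_subset_closedBall (by linarith)
      exact subset_trans h2 (Metric.closedBall_subset_cthickening hz δ)
    have hballW : Metric.closedBall z (2*ρ) ⊆ W := hballK'.trans hδ
    have hsph : Metric.sphere z (2*ρ) ⊆ C := by
      intro w hw
      rw [Metric.mem_sphere] at hw
      constructor
      · exact hballK' (Metric.mem_closedBall.2 hw.le)
      · intro hwB
        obtain ⟨e', he'S, hwe'⟩ := Set.mem_iUnion₂.1 hwB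
        rw [Metric.mem_ball] at hwe'
        have h1 : dist w e ≤ dist w z + dist z e := dist_triangle w z e
        have hwe : dist w e < 3 * ρ := by rw [hw] at h1; linarith
        have he'e : dist e' e < 4 * ρ := by
          have h2 := dist_triangle e' w e
          have h3 : dist e' w < ρ := by rw [dist_comm]; exact hwe'
          linarith
        have he'mem : e' ∈ Metric.ball e (r e) ∩ E :=
          ⟨Metric.mem_ball.2 (lt_trans he'e (hρr e heS)), he'S.1⟩
        have he'eq : e' = e := hr e heS he'mem
        rw [he'eq] at hwe'
        have h4 : dist w z ≤ dist w e + dist e z := dist_triangle w e z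
        rw [hw, dist_comm e z] at h4
        linarith
    have hbound : ∀ w ∈ Metric.sphere z (2*ρ), dist (g w) (h k w) ≤ ε/2 :=
      fun w hw => (hk w (hsph hw)).le
    have hfin := Stmt10Aux.mvp_bound hW (hhk k) hg
      (by linarith : (0:ℝ) < 2*ρ) hballW (by linarith : (0:ℝ) ≤ ε/2) hbound
    calc dist (g z) ((fun k => h k) k z) ≤ ε/2 := hfin
      _ < ε := by linarith
  · have hzC : z ∈ C := ⟨hKK' hz, hzB⟩
    have := hk z hzC
    calc dist (g z) ((fun k => h k) k z) < ε/2 := this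
      _ < ε := by linarith
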